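/- Let A ≥ 1 be an integer and c > 0, N₀ > 0. Let 𝔸 be the set of finite sequences over {1,…,A^n} (indexing nested subcubes), and let N : 𝔸 → ℝ≥0 satisfy: (i) N is monotone with respect to extension of sequences (if s extends t then N(s) ≤ N(t)); (ii) for any sequence s, the number of j ∈ {1,…,A^n} with N(s⌢j) ≥ max(N(s)/(1+c), N₀) is at most A^{n-1}/2. Then for any integers 0 ≤ l ≤ k with k ≥ 1, the number of sequences (j₁,…,j_k) ∈ {1,…,A^n}^k with N(j₁,…,j_k) ≤ max(N(∅)/(1+c)^l, N₀) is at least A^{nk} · ∑_{i=l}^{k} C(k,i) (1/(2A))^{k-i} (1 - 1/(2A))^i. -/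

import Mathlib

open Finset Classical

/-- Number of "good" steps along a path: a step from `s` to `s ++ [x]` is good when
`N (s ++ [x]) < max (N s / (1+c)) N₀`. -/
noncomputable def gcount (c N₀ : ℝ) {β : Type*} : (N : List β → ℝ) → List β → ℕ
  | _, [] => 0
  | N, x :: s =>
      (if max (N [] / (1 + c)) N₀ ≤ N [x] then 0 else 1)
        + gcount c N₀ (fun t => N (x :: t)) s

lemma filter_card_irrel {α : Type*} {p : α → Prop} (h1 h2 : DecidablePred p) (s : Finset α) :
    (@Finset.filter α p h1 s).card = (@Finset.filter α p h2 s).card := by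
  have : h1 = h2 := funext fun a => Subsingleton.elim _ _
  rw [this]

lemma ofFn_cons {β : Type*} {k : ℕ} (x : β) (g : Fin k → β) :
    List.ofFn (Fin.cons x g) = x :: List.ofFn g := by
  rw [List.ofFn_succ]; simp [Fin.cons_succ]

lemma card_filter_succ {β : Type*} [Fintype β] {k : ℕ} (P : (Fin (k + 1) → β) → Prop) :
    ((univ.filter fun j : Fin (k + 1) → β => P j).card)
      = ∑ x : β, (univ.filter fun g : Fin k → β => P (Fin.cons x g)).card := by
  classical
  rw [← Fintype.card_subtype]
  have e : {j : Fin (k + 1) → β // P j} ≃ Σ x : β, {g : Fin k → β // P (Fin.cons x g)} := by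
    refine (Equiv.subtypeEquiv (Fin.consEquiv fun _ : Fin (k + 1) => β).symm ?_).trans
      (Equiv.subtypeProdEquivSigmaSubtype fun x g => P (Fin.cons x g))
    intro j
    simp [Fin.consEquiv, Fin.cons_self_tail]
  rw [Fintype.card_congr e, Fintype.card_sigma]
  congr 1; ext x; rw [← Fintype.card_subtype]

lemma pascal_sum (p q : ℝ) (k l : ℕ) :
    ∑ i ∈ Finset.Icc (l + 1) (k + 1), ((k + 1).choose i : ℝ) * p ^ (k + 1 - i) * q ^ i
      = p * ∑ i ∈ Finset.Icc (l + 1) k, (k.choose i : ℝ) * p ^ (k - i) * q ^ i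
        + q * ∑ i ∈ Finset.Icc l k, (k.choose i : ℝ) * p ^ (k - i) * q ^ i := by
  by_cases hlk : k < l
  · rw [Finset.Icc_eq_empty (by omega), Finset.Icc_eq_empty (by omega),
      Finset.Icc_eq_empty (by omega)]
    simp
  push_neg at hlk
  have hmap : ∀ (a b : ℕ) (f : ℕ → ℝ), ∑ i ∈ Finset.Icc (a + 1) (b + 1), f i
      = ∑ i ∈ Finset.Icc a b, f (i + 1) := by
    intro a b f
    rw [← map_add_right_Icc a b 1, Finset.sum_map]
    rfl
  rw [hmap l k]
  have step : ∀ i ∈ Finset.Icc l k,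
      ((k + 1).choose (i + 1) : ℝ) * p ^ (k + 1 - (i + 1)) * q ^ (i + 1)
      = (k.choose (i + 1) : ℝ) * p ^ (k + 1 - (i + 1)) * q ^ (i + 1)
        + q * ((k.choose i : ℝ) * p ^ (k - i) * q ^ i) := by
    intro i hi
    rw [Nat.choose_succ_succ]
    have : k + 1 - (i + 1) = k - i := by omega
    rw [this]
    push_cast
    ring
  rw [Finset.sum_congr rfl step, Finset.sum_add_distrib, ← Finset.mul_sum]
  congr 1
  have h1 : ∑ i ∈ Finset.Icc l k, (k.choose (i + 1) : ℝ) * p ^ (k + 1 - (i + 1)) * q ^ (i + 1)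
      = ∑ i ∈ Finset.Icc (l + 1) (k + 1), (k.choose i : ℝ) * p ^ (k + 1 - i) * q ^ i := by
    rw [hmap l k]
  rw [h1, Finset.sum_Icc_succ_top (by omega : l + 1 ≤ k + 1)]
  rw [Nat.choose_succ_self]
  push_cast
  rw [Finset.mul_sum]
  simp only [mul_zero, zero_mul, add_zero]
  apply Finset.sum_congr rfl
  intro i hi
  have hik : i ≤ k := (Finset.mem_Icc.mp hi).2
  have : k + 1 - i = (k - i) + 1 := by omega
  rw [this, pow_succ]
  ring

lemma gcount_bound {β : Type*} (c N₀ : ℝ) (hc : 0 < c) :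
    ∀ (s : List β) (N : List β → ℝ), (∀ t, 0 ≤ N t) →
      (∀ u t : List β, t <+: u → N u ≤ N t) →
      N s ≤ max (N [] / (1 + c) ^ gcount c N₀ N s) N₀ := by
  intro s
  induction s with
  | nil =>
      intro N _ _
      simp [gcount]
  | cons x t ih =>
      intro N hpos hmono
      have h1c : (0:ℝ) < 1 + c := by linarith
      set N' : List β → ℝ := fun u => N (x :: u) with hN'
      have hpos' : ∀ t, 0 ≤ N' t := fun t => hpos _
      have hmono' : ∀ u t : List β, t <+: u → N' u ≤ N' t := by
        intro u t ⟨w, hw⟩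
        exact hmono (x :: u) (x :: t) ⟨w, by simp [← hw]⟩
      have IH := ih N' hpos' hmono'
      set g := gcount c N₀ N' t with hg
      have hgc : gcount c N₀ N (x :: t) =
          (if max (N [] / (1 + c)) N₀ ≤ N [x] then 0 else 1) + g := rfl
      have hpowpos : (0:ℝ) < (1 + c) ^ g := pow_pos h1c g
      rw [hgc]
      split_ifs with hbad
      · have h0 : N [x] ≤ N [] := hmono [x] [] ⟨[x], rfl⟩
        have : N' [] / (1 + c) ^ g ≤ N [] / (1 + c) ^ g :=
          div_le_div_of_nonneg_right h0 hpowpos.le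
        calc N (x :: t) ≤ max (N' [] / (1 + c) ^ g) N₀ := IH
          _ ≤ max (N [] / (1 + c) ^ ((0:ℕ) + g)) N₀ := by
              simp only [Nat.zero_add]
              exact max_le_max this le_rfl
      · have hgood : N [x] < max (N [] / (1 + c)) N₀ := lt_of_not_ge hbad
        rcases lt_max_iff.mp hgood with h | h
        · have key : N' [] / (1 + c) ^ g ≤ N [] / (1 + c) ^ (1 + g) := by
            have : N' [] ≤ N [] / (1 + c) := le_of_lt h
            calc N' [] / (1 + c) ^ g ≤ (N [] / (1 + c)) / (1 + c) ^ g :=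
                  div_le_div_of_nonneg_right this hpowpos.le
              _ = N [] / (1 + c) ^ (1 + g) := by
                  rw [div_div, ← pow_succ', Nat.add_comm 1 g]
          calc N (x :: t) ≤ max (N' [] / (1 + c) ^ g) N₀ := IH
            _ ≤ max (N [] / (1 + c) ^ (1 + g)) N₀ := max_le_max key le_rfl
        · have key : N' [] / (1 + c) ^ g ≤ N₀ := by
            have h1 : N' [] / (1 + c) ^ g ≤ N' [] := by
              apply div_le_self (hpos _)
              exact one_le_pow₀ (by linarith)
            exact h1.trans h.le
          have : N (x :: t) ≤ N₀ := IH.trans (max_le key le_rfl)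
          exact this.trans (le_max_right _ _)

lemma count_lemma (c N₀ : ℝ) {β : Type*} [Fintype β] (p : ℝ) (hp : 0 ≤ p) (hq : 0 ≤ 1 - p) :
    ∀ (k : ℕ) (N : List β → ℝ),
      (∀ s : List β, ((univ.filter fun j : β =>
          max (N s / (1 + c)) N₀ ≤ N (s ++ [j])).card : ℝ) ≤ (Fintype.card β : ℝ) * p) →
      ∀ l : ℕ,
        (Fintype.card β : ℝ) ^ k *
            ∑ i ∈ Finset.Icc l k, (k.choose i : ℝ) * p ^ (k - i) * (1 - p) ^ i ≤
          ((univ.filter fun j : Fin k → β =>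
            l ≤ gcount c N₀ N (List.ofFn j)).card : ℝ) := by
  intro k
  induction k with
  | zero =>
      intro N hhalf l
      match l with
      | 0 => simp [gcount]
      | Nat.succ m =>
          rw [Finset.Icc_eq_empty (by omega)]
          simp [gcount]
  | succ k IH =>
      intro N hhalf l
      match l with
      | 0 =>
          have hsum : ∑ i ∈ Finset.Icc 0 (k + 1),
              ((k + 1).choose i : ℝ) * p ^ (k + 1 - i) * (1 - p) ^ i = 1 := by
            have := add_pow (1 - p) p (k + 1)
            simp only [sub_add_cancel, one_pow] at this
            rw [← Nat.Ico_zero_eq_range] at this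
            rw [Finset.Ico_add_one_right_eq_Icc] at this
            norm_num at this
            calc ∑ i ∈ Finset.Icc 0 (k + 1), ((k + 1).choose i : ℝ) * p ^ (k + 1 - i) * (1 - p) ^ i
                = ∑ i ∈ Finset.Icc 0 (k + 1), (1 - p) ^ i * p ^ (k + 1 - i) * ((k + 1).choose i : ℝ) :=
                  Finset.sum_congr rfl fun i _ => by ring
              _ = 1 := this.symm
          rw [hsum, mul_one]
          have : (univ.filter fun j : Fin (k + 1) → β =>
              0 ≤ gcount c N₀ N (List.ofFn j)) = univ := by
            apply Finset.filter_true_of_mem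
            intro j _
            exact Nat.zero_le _
          rw [this, Finset.card_univ, Fintype.card_fun]
          simp
      | Nat.succ m =>
          set M : ℝ := (Fintype.card β : ℝ) with hM
          have hM0 : 0 ≤ M := Nat.cast_nonneg _
          have hMk : (0:ℝ) ≤ M ^ k := pow_nonneg hM0 k
          set Sm : ℝ := ∑ i ∈ Finset.Icc m k, (k.choose i : ℝ) * p ^ (k - i) * (1 - p) ^ i with hSm
          set Sm1 : ℝ := ∑ i ∈ Finset.Icc (m + 1) k,
            (k.choose i : ℝ) * p ^ (k - i) * (1 - p) ^ i with hSm1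
          have hterm : ∀ i ∈ Finset.Icc m k,
              0 ≤ (k.choose i : ℝ) * p ^ (k - i) * (1 - p) ^ i := by
            intro i _
            positivity
          have hSm1nn : 0 ≤ Sm1 := Finset.sum_nonneg fun i _ => by positivity
          have hSmono : Sm1 ≤ Sm := by
            apply Finset.sum_le_sum_of_subset_of_nonneg
            · exact Finset.Icc_subset_Icc_left (by omega)
            · intro i _ _
              positivity
          set P : β → Prop := fun x => max (N [] / (1 + c)) N₀ ≤ N [x] with hP
          set b : ℝ := ((univ.filter P).card : ℝ) with hb
          have hb0 : 0 ≤ b := Nat.cast_nonneg _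
          have hbMp : b ≤ M * p := by
            have := hhalf []
            simpa [hP, hb] using this
          have hpt : ∀ x : β, M ^ k * (if P x then Sm1 else Sm) ≤
              ((univ.filter fun g : Fin k → β =>
                m + 1 ≤ gcount c N₀ N (List.ofFn (Fin.cons x g))).card : ℝ) := by
            intro x
            have hN' : ∀ s : List β, ((univ.filter fun j : β =>
                max ((fun t => N (x :: t)) s / (1 + c)) N₀
                  ≤ (fun t => N (x :: t)) (s ++ [j])).card : ℝ)
                ≤ M * p := fun s => hhalf (x :: s)
            have hgc : ∀ g : Fin k → β, gcount c N₀ N (List.ofFn (Fin.cons x g))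
                = (if P x then 0 else 1)
                  + gcount c N₀ (fun t => N (x :: t)) (List.ofFn g) := by
              intro g
              rw [ofFn_cons]
              rfl
            by_cases hx : P x
            · rw [if_pos hx]
              have heq : (univ.filter fun g : Fin k → β =>
                  m + 1 ≤ gcount c N₀ N (List.ofFn (Fin.cons x g)))
                  = univ.filter fun g : Fin k → β =>
                    m + 1 ≤ gcount c N₀ (fun t => N (x :: t)) (List.ofFn g) := by
                apply Finset.filter_congr
                intro g _
                rw [hgc g, if_pos hx]
                simp
              rw [heq]
              exact IH _ hN' (m + 1)
            · rw [if_neg hx]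
              have heq : (univ.filter fun g : Fin k → β =>
                  m + 1 ≤ gcount c N₀ N (List.ofFn (Fin.cons x g)))
                  = univ.filter fun g : Fin k → β =>
                    m ≤ gcount c N₀ (fun t => N (x :: t)) (List.ofFn g) := by
                apply Finset.filter_congr
                intro g _
                rw [hgc g, if_neg hx]
                constructor
                · intro h; omega
                · intro h; omega
              rw [heq]
              exact IH _ hN' m
          have hcf0 := card_filter_succ
            (fun j : Fin (k + 1) → β => m + 1 ≤ gcount c N₀ N (List.ofFn j))
          have hcf : (univ.filter fun j : Fin (k + 1) → β =>
                m + 1 ≤ gcount c N₀ N (List.ofFn j)).card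
              = ∑ x : β, (univ.filter fun g : Fin k → β =>
                m + 1 ≤ gcount c N₀ N (List.ofFn (Fin.cons x g))).card := by
            rw [filter_card_irrel _ (fun j => Classical.propDecidable _) _, hcf0]
            exact Finset.sum_congr rfl fun x _ => filter_card_irrel _ _ _
          rw [hcf]
          push_cast
          have hsum : ∑ x : β, M ^ k * (if P x then Sm1 else Sm) ≤
              ∑ x : β, ((univ.filter fun g : Fin k → β =>
                m + 1 ≤ gcount c N₀ N (List.ofFn (Fin.cons x g))).card : ℝ) :=
            Finset.sum_le_sum fun x _ => hpt x
          refine le_trans ?_ hsum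
          have hsplit : ∑ x : β, M ^ k * (if P x then Sm1 else Sm)
              = M ^ k * (b * Sm1 + (M - b) * Sm) := by
            rw [← Finset.mul_sum, Finset.sum_ite]
            rw [Finset.sum_const, Finset.sum_const]
            have hcards : ((univ.filter fun x => ¬ P x).card : ℝ) = M - b := by
              have h := Finset.card_filter_add_card_filter_not
                (s := (univ : Finset β)) (p := P)
              rw [Finset.card_univ] at h
              have h2 : ((univ.filter P).card : ℝ)
                  + ((univ.filter fun x => ¬ P x).card : ℝ) = M := by
                rw [hM]
                exact_mod_cast h
              linarith [h2]
            rw [nsmul_eq_mul, nsmul_eq_mul, hcards, ← hb]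
            try ring
          rw [hsplit, pascal_sum p (1 - p) k m, ← hSm1, ← hSm, pow_succ]
          have key : 0 ≤ M ^ k * ((M * p - b) * (Sm - Sm1)) :=
            mul_nonneg hMk (mul_nonneg (by linarith) (by linarith))
          nlinarith [key]

/-- Abstract iteration lemma (Lemma on cubes with big doubling index).
Sequences over `Fin (A^n)` index the nested subcubes obtained by repeated partition of a cube
into `A^n` equal subcubes; `N` abstracts the doubling index.  If `N` is monotone under
extension of sequences and for every node at most `A^{n-1}/2` of its `A^n` children `j`
satisfy `N(s⌢j) ≥ max(N(s)/(1+c), N₀)`, then for `0 ≤ l ≤ k` the number of sequences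
`(j₁,…,j_k)` with `N(j₁,…,j_k) ≤ max(N(∅)/(1+c)^l, N₀)` is at least
`A^{nk} ∑_{i=l}^k C(k,i) (1/(2A))^{k-i} (1-1/(2A))^i`. -/
theorem iteration_lemma (n A : ℕ) (hn : 1 ≤ n) (hA : 1 ≤ A) (c N₀ : ℝ) (hc : 0 < c)
    (hN₀ : 0 < N₀) (N : List (Fin (A ^ n)) → ℝ) (hNpos : ∀ s, 0 ≤ N s)
    (hmono : ∀ s t : List (Fin (A ^ n)), t <+: s → N s ≤ N t)
    (hhalf : ∀ s : List (Fin (A ^ n)),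
      ((Finset.univ.filter fun j : Fin (A ^ n) =>
        max (N s / (1 + c)) N₀ ≤ N (s ++ [j])).card : ℝ) ≤ (A : ℝ) ^ (n - 1) / 2)
    (l k : ℕ) (hlk : l ≤ k) (hk : 1 ≤ k) :
    (A : ℝ) ^ (n * k) *
        ∑ i ∈ Finset.Icc l k, (k.choose i : ℝ) * (1 / (2 * A)) ^ (k - i) *
          (1 - 1 / (2 * A)) ^ i ≤
      ((Finset.univ.filter fun j : Fin k → Fin (A ^ n) =>
        N (List.ofFn j) ≤ max (N [] / (1 + c) ^ l) N₀).card : ℝ) := by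

  have hA0 : (0:ℝ) < (A : ℝ) := by exact_mod_cast hA
  set p : ℝ := 1 / (2 * A) with hp_def
  have hp : 0 ≤ p := by positivity
  have hq : 0 ≤ 1 - p := by
    have h2A : (2:ℝ) ≤ 2 * A := by
      have : (1:ℝ) ≤ (A:ℝ) := by exact_mod_cast hA
      linarith
    have : p ≤ 1 / 2 := by
      rw [hp_def]
      apply div_le_div_of_nonneg_left (by norm_num) (by norm_num) h2A
    linarith
  have hcard : (Fintype.card (Fin (A ^ n)) : ℝ) = (A : ℝ) ^ n := by
    rw [Fintype.card_fin]
    push_cast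
    ring
  have hMp : (A : ℝ) ^ (n - 1) / 2 = (Fintype.card (Fin (A ^ n)) : ℝ) * p := by
    rw [hcard, hp_def]
    have hn' : n = (n - 1) + 1 := by omega
    rw [hn', pow_succ]
    field_simp
    ring_nf
    rw [show 1 + (n - 1) - 1 = n - 1 by omega]
  have hhalf' : ∀ s : List (Fin (A ^ n)),
      ((Finset.univ.filter fun j : Fin (A ^ n) =>
        max (N s / (1 + c)) N₀ ≤ N (s ++ [j])).card : ℝ)
        ≤ (Fintype.card (Fin (A ^ n)) : ℝ) * p := by
    intro s
    rw [← hMp]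
    exact hhalf s
  have hcl := count_lemma c N₀ p hp hq k N hhalf' l
  rw [hcard] at hcl
  rw [← pow_mul] at hcl
  refine le_trans hcl ?_
  have hsub : (univ.filter fun j : Fin k → Fin (A ^ n) =>
        l ≤ gcount c N₀ N (List.ofFn j))
      ⊆ univ.filter fun j : Fin k → Fin (A ^ n) =>
        N (List.ofFn j) ≤ max (N [] / (1 + c) ^ l) N₀ := by
    intro j hj
    rw [Finset.mem_filter] at hj ⊢
    refine ⟨Finset.mem_univ _, ?_⟩
    have hg := hj.2
    have hb := gcount_bound c N₀ hc (List.ofFn j) N hNpos hmono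
    have h1c : (1:ℝ) ≤ 1 + c := by linarith
    have hple : (1 + c) ^ l ≤ (1 + c) ^ (gcount c N₀ N (List.ofFn j)) :=
      pow_le_pow_right₀ h1c hg
    have hdiv : N [] / (1 + c) ^ (gcount c N₀ N (List.ofFn j)) ≤ N [] / (1 + c) ^ l := by
      apply div_le_div_of_nonneg_left (hNpos []) (by positivity) hple
    exact hb.trans (max_le_max hdiv le_rfl)
  exact_mod_cast Finset.card_le_card hsub
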